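/- Let φ ∈ 𝒫 with φ(1,1)=1 and suppose φ₁(t)=φ(1,t) is concave on (0,∞). Fix q > 1. Suppose (t_{2k+1})_{k=-M}^{N} and numbers are chosen via the Brudnyi–Kruglyak construction so that φ₁(t_{2k})/t_{2k} = q·φ₁(t_{2k+1})/t_{2k+1} and φ₁(t_{2k+2}) = q·φ₁(t_{2k+1}) for all k. Then for every t ∈ [t_{2k}, t_{2k+2}], φ₁(t) ≤ q·φ₁(t_{2k+1})·min(1, t/t_{2k+1}). -/

import Mathlib

/-- Brudnyi–Kruglyak construction: with `φ₁ = φ(1,·)` concave, `q > 1`, and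
points `a = t_{2k} ≤ b = t_{2k+1} ≤ c = t_{2k+2}` satisfying `φ₁(a)/a = q·φ₁(b)/b` and
`φ₁(c) = q·φ₁(b)`, every `t ∈ [a,c]` satisfies `φ₁(t) ≤ q·φ₁(b)·min(1, t/b)`. -/
theorem stmt14 (φ : ℝ → ℝ → ℝ)
    (hnonneg : ∀ s t : ℝ, 0 < s → 0 < t → 0 ≤ φ s t)
    (hhom : ∀ l s t : ℝ, 0 < l → 0 < s → 0 < t → φ (l * s) (l * t) = l * φ s t)
    (hmono0 : ∀ t s s' : ℝ, 0 < t → 0 < s → s ≤ s' → φ s t ≤ φ s' t)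
    (hmono1 : ∀ s t t' : ℝ, 0 < s → 0 < t → t ≤ t' → φ s t ≤ φ s t')
    (hnorm : φ 1 1 = 1)
    (hconc : ConcaveOn ℝ (Set.Ioi 0) (fun t => φ 1 t))
    (q : ℝ) (hq : 1 < q)
    (a b c : ℝ) (ha : 0 < a) (hab : a ≤ b) (hbc : b ≤ c)
    (h1 : φ 1 a / a = q * (φ 1 b / b))
    (h2 : φ 1 c = q * φ 1 b) :
    ∀ t : ℝ, a ≤ t → t ≤ c → φ 1 t ≤ q * φ 1 b * min 1 (t / b) := by
  intro t hat htc
  have hb : 0 < b := lt_of_lt_of_le ha hab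
  have ht : 0 < t := lt_of_lt_of_le ha hat
  -- φ 1 x / x = φ (1/x) 1 for x > 0
  have key : ∀ x : ℝ, 0 < x → φ 1 x / x = φ (1/x) 1 := by
    intro x hx
    have := hhom x (1/x) 1 hx (by positivity) one_pos
    rw [mul_one_div_cancel (ne_of_gt hx), mul_one] at this
    field_simp [this]
    exact this
  -- φ 1 x / x is nonincreasing
  have slope : ∀ x y : ℝ, 0 < x → x ≤ y → φ 1 y / y ≤ φ 1 x / x := by
    intro x y hx hxy
    have hy : 0 < y := lt_of_lt_of_le hx hxy
    rw [key x hx, key y hy]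
    exact hmono0 1 (1/y) (1/x) one_pos (by positivity)
      (one_div_le_one_div_of_le hx hxy)
  rcases le_total t b with htb | hbt
  · -- t ≤ b : min = t/b
    have hmin : min 1 (t / b) = t / b := min_eq_right ((div_le_one hb).2 htb)
    rw [hmin]
    have hslope : φ 1 t / t ≤ φ 1 a / a := slope a t ha hat
    rw [h1] at hslope
    have := mul_le_mul_of_nonneg_left hslope (le_of_lt ht)
    calc φ 1 t = t * (φ 1 t / t) := by field_simp
      _ ≤ t * (q * (φ 1 b / b)) := this
      _ = q * φ 1 b * (t / b) := by ring
  · -- b ≤ t : min = 1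
    have hmin : min 1 (t / b) = 1 := min_eq_left ((one_le_div hb).2 hbt)
    rw [hmin, mul_one, ← h2]
    exact hmono1 1 t c one_pos ht htc
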